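/- Let (Ω, μ) be a σ-finite measure space and F : Ω → H weakly measurable. If the weakly defined map T_F : L²(Ω, μ) → H, ⟨T_F φ, h⟩ = ∫_Ω φ(ω)⟨F(ω), h⟩ dμ(ω), is a bounded operator, then F is a continuous Bessel mapping, i.e., there exists B > 0 with ∫_Ω |⟨f, F(ω)⟩|² dμ(ω) ≤ B‖f‖² for all f ∈ H. -/

import Mathlib

open MeasureTheory

local notation "⟪" x ", " y "⟫" => @inner ℂ _ _ x y

/-- If `(Ω,μ)` is σ-finite and the weakly defined synthesis map is a bounded operator,
then `F` is a continuous Bessel mapping. -/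
theorem bounded_synthesis_implies_bessel
    {H : Type*} [NormedAddCommGroup H] [InnerProductSpace ℂ H] [CompleteSpace H]
    {Ω : Type*} [MeasurableSpace Ω] (μ : Measure Ω) [SigmaFinite μ]
    (F : Ω → H)
    (hmeas : ∀ f : H, Measurable fun ω => ⟪f, F ω⟫)
    (T : Lp ℂ 2 μ →L[ℂ] H)
    (hT : ∀ (φ : Lp ℂ 2 μ) (h : H), ⟪T φ, h⟫ = ∫ ω, (φ : Ω → ℂ) ω * ⟪F ω, h⟫ ∂μ) :
    ∃ B : ℝ, 0 < B ∧ ∀ f : H, ∫ ω, ‖⟪f, F ω⟫‖ ^ 2 ∂μ ≤ B * ‖f‖ ^ 2 := by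
  refine ⟨‖T‖ ^ 2 + 1, by positivity, fun f => ?_⟩
  set g : Ω → ℂ := fun ω => ⟪f, F ω⟫ with hgdef
  have hgm : Measurable g := hmeas f
  -- truncation sets
  set s : ℕ → Set Ω := fun n => spanningSets μ n ∩ {ω | ‖g ω‖ ≤ n} with hsdef
  have hsm : ∀ n, MeasurableSet (s n) := fun n =>
    (measurableSet_spanningSets μ n).inter (measurableSet_le hgm.norm measurable_const)
  have hsfin : ∀ n, μ (s n) < ⊤ := fun n =>
    lt_of_le_of_lt (measure_mono Set.inter_subset_left) (measure_spanningSets_lt_top μ n)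
  have hsmono : Monotone s := by
    intro n m hnm
    refine Set.inter_subset_inter (monotone_spanningSets μ hnm) ?_
    intro ω hω
    exact le_trans hω ((Nat.cast_le (α := ℝ)).mpr hnm)
  have hsunion : ⋃ n, s n = Set.univ := by
    ext ω
    simp only [Set.mem_iUnion, Set.mem_univ, iff_true]
    obtain ⟨n1, hn1⟩ : ∃ n, ω ∈ spanningSets μ n := by
      have := iUnion_spanningSets μ
      have : ω ∈ ⋃ n, spanningSets μ n := this ▸ Set.mem_univ ω
      exact Set.mem_iUnion.mp this
    obtain ⟨n2, hn2⟩ := exists_nat_ge (‖g ω‖)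
    exact ⟨max n1 n2, monotone_spanningSets μ (le_max_left _ _) hn1,
      le_trans hn2 (by exact_mod_cast le_max_right n1 n2)⟩
  -- the truncated functions
  set φ : ℕ → Ω → ℂ := fun n => (s n).indicator g with hφdef
  have hφmem : ∀ n, MemLp (φ n) 2 μ := by
    intro n
    rw [hφdef]
    rw [memLp_indicator_iff_restrict (hsm n)]
    have : IsFiniteMeasure (μ.restrict (s n)) :=
      ⟨by rw [Measure.restrict_apply_univ]; exact hsfin n⟩
    refine MemLp.of_bound (hgm.aestronglyMeasurable) n ?_
    rw [ae_restrict_iff' (hsm n)]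
    exact ae_of_all _ fun ω hω => hω.2
  set Φ : ℕ → Lp ℂ 2 μ := fun n => (hφmem n).toLp (φ n) with hΦdef
  -- the truncated integrals
  set J : ℕ → ℝ := fun n => ∫ ω, (s n).indicator (fun ω => ‖g ω‖ ^ 2) ω ∂μ with hJdef
  have hInt : ∀ n, Integrable ((s n).indicator (fun ω => ‖g ω‖ ^ 2)) μ := by
    intro n
    rw [integrable_indicator_iff (hsm n)]
    refine Measure.integrableOn_of_bounded (hsfin n).ne
      ((hgm.norm.pow_const 2).aestronglyMeasurable) (M := (n : ℝ) ^ 2) ?_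
    rw [ae_restrict_iff' (hsm n)]
    refine ae_of_all _ fun ω hω => ?_
    rw [Real.norm_eq_abs, abs_of_nonneg (by positivity)]
    exact pow_le_pow_left₀ (norm_nonneg _) hω.2 2
  have hJnonneg : ∀ n, 0 ≤ J n := fun n =>
    integral_nonneg fun ω => Set.indicator_nonneg (fun ω _ => by positivity) ω
  -- norm of Φ n squared is J n
  have hΦnormsq : ∀ n, ‖Φ n‖ ^ 2 = J n := by
    intro n
    have h1 : (‖Φ n‖ ^ 2 : ℝ) = RCLike.re (⟪Φ n, Φ n⟫) := (inner_self_eq_norm_sq _).symm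
    rw [h1, L2.inner_def]
    have hcoe : (Φ n : Ω → ℂ) =ᵐ[μ] φ n := (hφmem n).coeFn_toLp
    have : (∫ a, ⟪(Φ n : Ω → ℂ) a, (Φ n : Ω → ℂ) a⟫ ∂μ)
        = ∫ a, (RCLike.ofReal ((s n).indicator (fun ω => ‖g ω‖ ^ 2) a) : ℂ) ∂μ := by
      refine integral_congr_ae ?_
      filter_upwards [hcoe] with a ha
      rw [ha]
      simp only [hφdef]
      by_cases h : a ∈ s n
      · simp only [Set.indicator_of_mem h]
        rw [RCLike.inner_apply, RCLike.mul_conj]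
        norm_cast
      · simp [Set.indicator_of_notMem h]
    rw [this, integral_ofReal, RCLike.ofReal_re]
  -- key bound : J n ≤ ‖T‖ * √(J n) * ‖f‖
  have hkey : ∀ n, J n ≤ ‖T‖ * Real.sqrt (J n) * ‖f‖ := by
    intro n
    have hinner := hT (Φ n) f
    have hcoe : (Φ n : Ω → ℂ) =ᵐ[μ] φ n := (hφmem n).coeFn_toLp
    have hval : ⟪T (Φ n), f⟫ = ((J n : ℝ) : ℂ) := by
      rw [hinner]
      have : (∫ ω, (Φ n : Ω → ℂ) ω * ⟪F ω, f⟫ ∂μ)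
          = ∫ ω, (RCLike.ofReal ((s n).indicator (fun ω => ‖g ω‖ ^ 2) ω) : ℂ) ∂μ := by
        refine integral_congr_ae ?_
        filter_upwards [hcoe] with ω hω
        rw [hω]
        simp only [hφdef]
        by_cases h : ω ∈ s n
        · simp only [Set.indicator_of_mem h]
          have : ⟪F ω, f⟫ = starRingEnd ℂ (g ω) :=
            (inner_conj_symm (F ω) f).symm
          rw [this, RCLike.mul_conj]
          norm_cast
        · simp [Set.indicator_of_notMem h]
      rw [this, integral_ofReal]
      simp only [hJdef, RCLike.ofReal_alg]
      norm_num
    have h1 : J n ≤ ‖⟪T (Φ n), f⟫‖ := by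
      rw [hval]
      rw [Complex.norm_real]
      exact le_abs_self _
    have h2 : ‖⟪T (Φ n), f⟫‖ ≤ ‖T (Φ n)‖ * ‖f‖ := norm_inner_le_norm _ _
    have h3 : ‖T (Φ n)‖ ≤ ‖T‖ * ‖Φ n‖ := T.le_opNorm _
    have h4 : ‖Φ n‖ = Real.sqrt (J n) := by
      rw [← hΦnormsq n, Real.sqrt_sq (norm_nonneg _)]
    calc J n ≤ ‖T (Φ n)‖ * ‖f‖ := h1.trans h2
      _ ≤ ‖T‖ * ‖Φ n‖ * ‖f‖ := by
          exact mul_le_mul_of_nonneg_right h3 (norm_nonneg f)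
      _ = ‖T‖ * Real.sqrt (J n) * ‖f‖ := by rw [h4]
  -- deduce J n ≤ ‖T‖^2 * ‖f‖^2
  have hJbound : ∀ n, J n ≤ ‖T‖ ^ 2 * ‖f‖ ^ 2 := by
    intro n
    have h0 := hkey n
    have hs1 : Real.sqrt (J n) ^ 2 = J n := Real.sq_sqrt (hJnonneg n)
    have hs2 : 0 ≤ Real.sqrt (J n) := Real.sqrt_nonneg _
    nlinarith [sq_nonneg (‖T‖ * ‖f‖ - Real.sqrt (J n)), mul_nonneg (norm_nonneg T) (norm_nonneg f)]
  -- pass to the lintegral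
  set C : ℝ := ‖T‖ ^ 2 * ‖f‖ ^ 2 with hCdef
  have hCnonneg : 0 ≤ C := by positivity
  have hlin : ∫⁻ ω, ENNReal.ofReal (‖g ω‖ ^ 2) ∂μ ≤ ENNReal.ofReal C := by
    have hmono' : Monotone fun n => (s n).indicator
        (fun ω => ENNReal.ofReal (‖g ω‖ ^ 2)) := by
      intro n m hnm ω
      exact Set.indicator_le_indicator_of_subset (hsmono hnm) (fun _ => zero_le) ω
    have hmeas' : ∀ n, Measurable ((s n).indicator
        (fun ω => ENNReal.ofReal (‖g ω‖ ^ 2))) := fun n =>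
      ((hgm.norm.pow_const 2).ennreal_ofReal).indicator (hsm n)
    have hsup : (fun ω => ENNReal.ofReal (‖g ω‖ ^ 2))
        = fun ω => ⨆ n, (s n).indicator (fun ω => ENNReal.ofReal (‖g ω‖ ^ 2)) ω := by
      funext ω
      have hω : ω ∈ ⋃ n, s n := hsunion ▸ Set.mem_univ ω
      obtain ⟨n, hn⟩ := Set.mem_iUnion.mp hω
      refine le_antisymm ?_ ?_
      · exact le_iSup_of_le n (by rw [Set.indicator_of_mem hn])
      · exact iSup_le fun m => Set.indicator_le_self _ _ ω
    rw [hsup, lintegral_iSup hmeas' hmono']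
    refine iSup_le fun n => ?_
    have : ∫⁻ ω, (s n).indicator (fun ω => ENNReal.ofReal (‖g ω‖ ^ 2)) ω ∂μ
        = ENNReal.ofReal (J n) := by
      rw [hJdef]
      rw [ofReal_integral_eq_lintegral_ofReal (hInt n)
        (ae_of_all _ fun ω => Set.indicator_nonneg (fun ω _ => by positivity) ω)]
      refine lintegral_congr fun ω => ?_
      by_cases h : ω ∈ s n
      · simp [Set.indicator_of_mem h]
      · simp [Set.indicator_of_notMem h]
    rw [this]
    exact ENNReal.ofReal_le_ofReal (hJbound n)
  -- conclude
  have hnn : 0 ≤ᵐ[μ] fun ω => ‖g ω‖ ^ 2 := ae_of_all _ fun ω => by positivity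
  have hfinal : ∫ ω, ‖g ω‖ ^ 2 ∂μ ≤ C := by
    rw [integral_eq_lintegral_of_nonneg_ae hnn
      ((hgm.norm.pow_const 2).aestronglyMeasurable)]
    calc (∫⁻ ω, ENNReal.ofReal (‖g ω‖ ^ 2) ∂μ).toReal
        ≤ (ENNReal.ofReal C).toReal := by
          exact ENNReal.toReal_mono ENNReal.ofReal_ne_top hlin
      _ = C := ENNReal.toReal_ofReal hCnonneg
  refine hfinal.trans ?_
  rw [hCdef]
  nlinarith [sq_nonneg ‖f‖]
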